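/- (Fano's inequality) Let (E, ℬ) be a measurable space, N ≥ 2 an integer, (A_1, …, A_N) a measurable partition of E, and (ℙ_1, …, ℙ_N) probability measures on (E, ℬ). Then for every probability measure ℚ on (E, ℬ): (1/N)·Σ_{i=1}^N ℙ_i(A_i) ≤ ( (1/N)·Σ_{i=1}^N KL(ℙ_i, ℚ) + log 2 ) / log N, where KL(ℙ, ℚ) = ∫ log(dℙ/dℚ) dℙ if ℙ ≪ ℚ and KL(ℙ, ℚ) = +∞ otherwise. -/

import Mathlib

open MeasureTheory
open scoped ENNReal Classical

section FanoAux

open Real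

/-- Donsker–Varadhan style bound with `f = (log c)·1_A`. -/
lemma fano_key {E : Type*} [MeasurableSpace E] (μ ν : Measure E)
    [IsProbabilityMeasure μ] [IsProbabilityMeasure ν]
    (hac : μ ≪ ν) (hint : Integrable (llr μ ν) μ)
    {A : Set E} (hA : MeasurableSet A) {c : ℝ} (hc : 1 ≤ c) :
    Real.log c * (μ A).toReal
      ≤ ∫ x, llr μ ν x ∂μ + Real.log (1 + (c - 1) * (ν A).toReal) := by
  have hc0 : 0 < c := lt_of_lt_of_le one_pos hc
  set q : ℝ := (ν A).toReal with hq
  have hq0 : 0 ≤ q := ENNReal.toReal_nonneg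
  set Z : ℝ := 1 + (c - 1) * q with hZ
  have hZ1 : 1 ≤ Z := by
    have : 0 ≤ (c - 1) * q := mul_nonneg (by linarith) hq0
    simp only [hZ]; linarith
  have hZ0 : 0 < Z := lt_of_lt_of_le one_pos hZ1
  set u : E → ℝ := fun x => A.indicator (fun _ => Real.log c) x - llr μ ν x - Real.log Z with hu
  have h_ind_int : Integrable (A.indicator (fun _ => Real.log c)) μ :=
    (integrable_const _).indicator hA
  have h_sub_int : Integrable (fun x => A.indicator (fun _ => Real.log c) x - llr μ ν x) μ :=
    h_ind_int.sub hint
  have hu_int : Integrable u μ := h_sub_int.sub (integrable_const _)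
  set g : E → ℝ := fun x => (if x ∈ A then c else 1) * (ν.rnDeriv μ x).toReal / Z with hg
  have h_rn_int : Integrable (fun x => (ν.rnDeriv μ x).toReal) μ :=
    Measure.integrable_toReal_rnDeriv
  have h_bdd : ∀ x : E, ‖(if x ∈ A then c else 1 : ℝ)‖ ≤ c := by
    intro x
    by_cases hx : x ∈ A <;> simp [hx, abs_of_pos hc0, hc, le_refl]
  have h_meas : AEStronglyMeasurable (fun x : E => (if x ∈ A then c else 1 : ℝ)) μ :=
    (measurable_const.ite hA measurable_const).aestronglyMeasurable
  have h_mul_int : Integrable (fun x => (if x ∈ A then c else 1) * (ν.rnDeriv μ x).toReal) μ :=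
    h_rn_int.bdd_mul h_meas (Filter.Eventually.of_forall h_bdd)
  have hg_int : Integrable g μ := h_mul_int.div_const Z
  have h_exp_eq : (fun x => Real.exp (u x)) =ᵐ[μ] g := by
    filter_upwards [exp_neg_llr hac] with x hx
    have hx' : (Real.exp (llr μ ν x))⁻¹ = (ν.rnDeriv μ x).toReal := by
      rw [← Real.exp_neg]; exact hx
    have hind : Real.exp (A.indicator (fun _ => Real.log c) x) = (if x ∈ A then c else 1) := by
      by_cases hxA : x ∈ A <;> simp [hxA, Real.exp_log hc0]
    simp only [hu, hg, Real.exp_sub, Real.exp_log hZ0]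
    rw [hind, ← hx']
    ring
  have h_exp_int : Integrable (fun x => Real.exp (u x)) μ := hg_int.congr h_exp_eq.symm
  have hg_le : ∫ x, Real.exp (u x) ∂μ ≤ 1 := by
    rw [integral_congr_ae h_exp_eq]
    have h1 : ∫ x in A, (if x ∈ A then c else 1) * (ν.rnDeriv μ x).toReal ∂μ
        = c * ∫ x in A, (ν.rnDeriv μ x).toReal ∂μ := by
      rw [← integral_const_mul]
      exact setIntegral_congr_fun hA fun x hx => by simp [hx]
    have h2 : ∫ x in Aᶜ, (if x ∈ A then c else 1) * (ν.rnDeriv μ x).toReal ∂μ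
        = ∫ x in Aᶜ, (ν.rnDeriv μ x).toReal ∂μ := by
      refine setIntegral_congr_fun hA.compl fun x hx => ?_
      have : x ∉ A := hx
      simp [this]
    have hA_le : ∫ x in A, (ν.rnDeriv μ x).toReal ∂μ ≤ q :=
      Measure.setIntegral_toReal_rnDeriv_le (measure_ne_top ν A)
    have hAc_le : ∫ x in Aᶜ, (ν.rnDeriv μ x).toReal ∂μ ≤ (ν Aᶜ).toReal :=
      Measure.setIntegral_toReal_rnDeriv_le (measure_ne_top ν Aᶜ)
    have hcompl : (ν Aᶜ).toReal = 1 - q := by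
      rw [measure_compl hA (measure_ne_top ν A), measure_univ,
        ENNReal.toReal_sub_of_le prob_le_one ENNReal.one_ne_top, ENNReal.toReal_one]
    rw [hcompl] at hAc_le
    have hsplit : ∫ x, (if x ∈ A then c else 1) * (ν.rnDeriv μ x).toReal ∂μ ≤ Z := by
      rw [← integral_add_compl hA h_mul_int, h1, h2]
      have hmul : c * ∫ x in A, (ν.rnDeriv μ x).toReal ∂μ ≤ c * q :=
        mul_le_mul_of_nonneg_left hA_le hc0.le
      have hZeq : Z = c * q + (1 - q) := by rw [hZ]; ring
      rw [hZeq]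
      linarith
    calc ∫ x, g x ∂μ
        = (∫ x, (if x ∈ A then c else 1) * (ν.rnDeriv μ x).toReal ∂μ) / Z := by
          rw [hg]; exact integral_div _ _
      _ ≤ Z / Z := div_le_div_of_nonneg_right hsplit hZ0.le
      _ = 1 := div_self hZ0.ne'
  have hne : NeZero μ := ⟨IsProbabilityMeasure.ne_zero μ⟩
  have hjensen : Real.exp (∫ x, u x ∂μ) ≤ ∫ x, Real.exp (u x) ∂μ := by
    have := convexOn_exp.map_average_le continuous_exp.continuousOn isClosed_univ
      (Filter.Eventually.of_forall fun x => Set.mem_univ (u x)) hu_int h_exp_int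
    simpa [average_eq_integral] using this
  have hu_le : ∫ x, u x ∂μ ≤ 0 := Real.exp_le_one_iff.mp (hjensen.trans hg_le)
  have hu_eval : ∫ x, u x ∂μ
      = Real.log c * (μ A).toReal - ∫ x, llr μ ν x ∂μ - Real.log Z := by
    have e1 : ∫ x, u x ∂μ
        = (∫ x, (A.indicator (fun _ => Real.log c) x - llr μ ν x) ∂μ)
          - ∫ _x, (Real.log Z : ℝ) ∂μ := integral_sub h_sub_int (integrable_const _)
    have e2 : ∫ x, (A.indicator (fun _ => Real.log c) x - llr μ ν x) ∂μ
        = (∫ x, A.indicator (fun _ => Real.log c) x ∂μ) - ∫ x, llr μ ν x ∂μ :=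
      integral_sub h_ind_int hint
    rw [e1, e2, integral_indicator_const _ hA, integral_const]
    simp [mul_comm, Measure.real]
  rw [hu_eval] at hu_le
  linarith

/-- Finite Jensen for `log`. -/
lemma fano_log_sum {N : ℕ} (hN : 1 ≤ N) (x : Fin N → ℝ) (hx : ∀ i, 0 < x i) :
    ∑ i, Real.log (x i) ≤ N * Real.log ((∑ i, x i) / N) := by
  have hN0 : (0 : ℝ) < N := by exact_mod_cast hN
  have h := (strictConcaveOn_log_Ioi.concaveOn).le_map_sum
    (t := Finset.univ) (w := fun _ : Fin N => (N : ℝ)⁻¹) (p := x)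
    (fun i _ => by positivity)
    (by simp [Finset.card_univ]; field_simp)
    (fun i _ => hx i)
  simp only [smul_eq_mul, ← Finset.mul_sum] at h
  have h2 := mul_le_mul_of_nonneg_left h hN0.le
  calc ∑ i, Real.log (x i) = (N : ℝ) * ((N : ℝ)⁻¹ * ∑ i, Real.log (x i)) := by
        field_simp
    _ ≤ (N : ℝ) * Real.log ((N : ℝ)⁻¹ * ∑ i, x i) := h2
    _ = N * Real.log ((∑ i, x i) / N) := by rw [inv_mul_eq_div]

end FanoAux

/-- Kullback–Leibler divergence: `∫ log(dμ/dν) dμ` when `μ ≪ ν` (and the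
log-likelihood ratio is integrable), `+∞` otherwise. -/
noncomputable def klDiv {α : Type*} [MeasurableSpace α] (μ ν : Measure α) : ℝ≥0∞ :=
  if μ ≪ ν ∧ Integrable (llr μ ν) μ then ENNReal.ofReal (∫ x, llr μ ν x ∂μ) else ⊤

/-- Fano's inequality (Lemma C.2): for a measurable partition `(A_1,…,A_N)` and
probability measures `(ℙ_1,…,ℙ_N)`, for every probability measure `ℚ`,
`(1/N)·Σ ℙ_i(A_i) ≤ ((1/N)·Σ KL(ℙ_i, ℚ) + log 2)/log N`. -/
theorem fano_inequality {E : Type*} [MeasurableSpace E] (N : ℕ) (hN : 2 ≤ N)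
    (A : Fin N → Set E) (hmeas : ∀ i, MeasurableSet (A i))
    (hdisj : Pairwise (Function.onFun Disjoint A))
    (hcover : (⋃ i, A i) = Set.univ)
    (P : Fin N → Measure E) (hP : ∀ i, IsProbabilityMeasure (P i))
    (Q : Measure E) (hQ : IsProbabilityMeasure Q) :
    (1 / N : ℝ≥0∞) * ∑ i, P i (A i)
      ≤ ((1 / N : ℝ≥0∞) * ∑ i, klDiv (P i) Q + ENNReal.ofReal (Real.log 2)) /
          ENNReal.ofReal (Real.log N) := by
  have hN1 : (1 : ℝ) < N := by exact_mod_cast hN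
  have hNR : (0 : ℝ) < N := by linarith
  by_cases hdeg : ∀ i, P i ≪ Q ∧ Integrable (llr (P i) Q) (P i)
  · -- non-degenerate case
    set p : Fin N → ℝ := fun i => (P i (A i)).toReal with hp
    set K : Fin N → ℝ := fun i => ∫ x, llr (P i) Q x ∂(P i) with hKdef
    set qq : Fin N → ℝ := fun i => (Q (A i)).toReal with hqq
    have hq0 : ∀ i, 0 ≤ qq i := fun i => ENNReal.toReal_nonneg
    have hK0 : ∀ i, 0 ≤ K i := by
      intro i
      haveI := hP i
      have := fano_key (P i) Q (hdeg i).1 (hdeg i).2 (hmeas i) (le_refl (1 : ℝ))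
      simpa using this
    have hkey : ∀ i, Real.log N * p i ≤ K i + Real.log (1 + ((N : ℝ) - 1) * qq i) := by
      intro i
      haveI := hP i
      exact fano_key (P i) Q (hdeg i).1 (hdeg i).2 (hmeas i) hN1.le
    have hqsum : ∑ i, qq i = 1 := by
      have h1 : Q Set.univ = ∑ i, Q (A i) := by
        rw [← hcover, measure_iUnion hdisj hmeas, tsum_fintype]
      have h2 : (1 : ℝ≥0∞) = ∑ i, Q (A i) := by rw [← h1, measure_univ]
      have h3 := congrArg ENNReal.toReal h2
      rw [ENNReal.toReal_sum (fun i _ => measure_ne_top Q (A i))] at h3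
      simpa using h3.symm
    have hxpos : ∀ i, 0 < 1 + ((N : ℝ) - 1) * qq i := by
      intro i
      have : 0 ≤ ((N : ℝ) - 1) * qq i := mul_nonneg (by linarith) (hq0 i)
      linarith
    have hjsum : ∑ i, Real.log (1 + ((N : ℝ) - 1) * qq i) ≤ N * Real.log 2 := by
      have h := fano_log_sum (le_trans one_le_two hN) _ hxpos
      have hs : ∑ i, (1 + ((N : ℝ) - 1) * qq i) = 2 * N - 1 := by
        rw [Finset.sum_add_distrib, ← Finset.mul_sum, hqsum]
        simp [Finset.card_univ]
        ring
      rw [hs] at h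
      refine h.trans ?_
      have harg : (2 * (N : ℝ) - 1) / N ≤ 2 := by
        rw [div_le_iff₀ hNR]; linarith
      have hpos : (0 : ℝ) < (2 * (N : ℝ) - 1) / N := by
        apply div_pos; linarith; exact hNR
      exact mul_le_mul_of_nonneg_left (Real.log_le_log hpos harg) hNR.le
    have hstar : Real.log N * ∑ i, p i ≤ ∑ i, K i + N * Real.log 2 := by
      calc Real.log N * ∑ i, p i = ∑ i, Real.log N * p i := Finset.mul_sum _ _ _
        _ ≤ ∑ i, (K i + Real.log (1 + ((N : ℝ) - 1) * qq i)) :=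
            Finset.sum_le_sum fun i _ => hkey i
        _ = ∑ i, K i + ∑ i, Real.log (1 + ((N : ℝ) - 1) * qq i) := Finset.sum_add_distrib
        _ ≤ ∑ i, K i + N * Real.log 2 := by linarith [hjsum]
    have hp0 : 0 ≤ ∑ i, p i := Finset.sum_nonneg fun i _ => ENNReal.toReal_nonneg
    have hK0s : 0 ≤ ∑ i, K i := Finset.sum_nonneg fun i _ => hK0 i
    have hreal : 1 / (N : ℝ) * (∑ i, p i) * Real.log N
        ≤ 1 / (N : ℝ) * ∑ i, K i + Real.log 2 := by
      have h2 := mul_le_mul_of_nonneg_left hstar (by positivity : (0 : ℝ) ≤ 1 / N)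
      calc 1 / (N : ℝ) * (∑ i, p i) * Real.log N
          = 1 / (N : ℝ) * (Real.log N * ∑ i, p i) := by ring
        _ ≤ 1 / (N : ℝ) * (∑ i, K i + N * Real.log 2) := h2
        _ = 1 / (N : ℝ) * ∑ i, K i + Real.log 2 := by field_simp
    -- ENNReal bookkeeping
    have hL0 : ENNReal.ofReal (Real.log N) ≠ 0 := by
      simp only [ne_eq, ENNReal.ofReal_eq_zero, not_le]
      exact Real.log_pos hN1
    rw [ENNReal.le_div_iff_mul_le (Or.inl hL0) (Or.inl ENNReal.ofReal_ne_top)]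
    have hsum1 : ∑ i, P i (A i) = ENNReal.ofReal (∑ i, p i) := by
      rw [ENNReal.ofReal_sum_of_nonneg (fun i _ => ENNReal.toReal_nonneg)]
      exact Finset.sum_congr rfl fun i _ => (ENNReal.ofReal_toReal (measure_ne_top _ _)).symm
    have hsum2 : ∑ i, klDiv (P i) Q = ENNReal.ofReal (∑ i, K i) := by
      rw [ENNReal.ofReal_sum_of_nonneg (fun i _ => hK0 i)]
      exact Finset.sum_congr rfl fun i _ => if_pos (hdeg i)
    have hNenn : (1 / N : ℝ≥0∞) = ENNReal.ofReal (1 / (N : ℝ)) := by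
      rw [ENNReal.ofReal_div_of_pos hNR, ENNReal.ofReal_one, ENNReal.ofReal_natCast]
    rw [hsum1, hsum2, hNenn, ← ENNReal.ofReal_mul (by positivity),
      ← ENNReal.ofReal_mul (by positivity), ← ENNReal.ofReal_mul (by positivity),
      ← ENNReal.ofReal_add (by positivity) (Real.log_nonneg one_le_two)]
    exact ENNReal.ofReal_le_ofReal hreal
  · -- degenerate case: some KL is infinite
    obtain ⟨i, hi⟩ := not_forall.mp hdeg
    have hsum : ∑ i, klDiv (P i) Q = ⊤ :=
      ENNReal.sum_eq_top.mpr ⟨i, Finset.mem_univ i, if_neg hi⟩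
    have hinv : (1 / N : ℝ≥0∞) ≠ 0 := by
      rw [one_div]
      exact ENNReal.inv_ne_zero.mpr (ENNReal.natCast_ne_top N)
    rw [hsum, ENNReal.mul_top hinv, top_add,
      ENNReal.top_div_of_ne_top ENNReal.ofReal_ne_top]
    exact le_top
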